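/- Let A = exp(𝔞) with 𝔞 abelian in Sym(V) act linearly on V. The null cone N = {x ∈ V : 0 ∈ closure(A·x)} is a finite union of linear subspaces of V; in particular N is a real algebraic subset of V, hence closed. -/

import Mathlib

open RealInnerProductSpace

lemma exp_apply_eigenvec {V : Type*} [NormedAddCommGroup V] [InnerProductSpace ℝ V]
    [CompleteSpace V] (f : V →L[ℝ] V) (c : ℝ) (v : V) (h : f v = c • v) :
    NormedSpace.exp f v = Real.exp c • v := by
  have hpow : ∀ n : ℕ, (f ^ n) v = c ^ n • v := by
    intro n
    induction n with
    | zero => simp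
    | succ n ih =>
      rw [pow_succ, ContinuousLinearMap.mul_apply, h, map_smul, ih, smul_smul, pow_succ]
      ring_nf
  have hsum : Summable fun n : ℕ => ((Nat.factorial n : ℝ))⁻¹ • f ^ n :=
    NormedSpace.expSeries_summable' f
  have hsum2 : Summable fun n : ℕ => ((Nat.factorial n : ℝ))⁻¹ * c ^ n := by
    simpa [smul_eq_mul] using NormedSpace.expSeries_summable' (𝕂 := ℝ) c
  have hev : NormedSpace.exp f v = ∑' n : ℕ, (((Nat.factorial n : ℝ))⁻¹ • f ^ n) v := by
    rw [NormedSpace.exp_eq_tsum ℝ]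
    exact ((ContinuousLinearMap.apply ℝ V v).map_tsum hsum)
  rw [hev]
  have : ∀ n : ℕ, (((Nat.factorial n : ℝ))⁻¹ • f ^ n) v
      = (((Nat.factorial n : ℝ))⁻¹ * c ^ n) • v := by
    intro n
    simp [ContinuousLinearMap.smul_apply, hpow n, smul_smul]
  simp_rw [this]
  rw [hsum2.tsum_smul_const]
  congr 1
  rw [Real.exp_eq_exp_ℝ, NormedSpace.exp_eq_tsum ℝ]
  simp [smul_eq_mul]

set_option maxHeartbeats 2000000 in
theorem null_cone_abelian
    (V : Type*) [NormedAddCommGroup V] [InnerProductSpace ℝ V] [FiniteDimensional ℝ V]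
    (𝔞 : Submodule ℝ (V →L[ℝ] V))
    (hsym : ∀ ξ : 𝔞, ∀ v w : V, ⟪(ξ : V →L[ℝ] V) v, w⟫ = ⟪v, (ξ : V →L[ℝ] V) w⟫)
    (habelian : ∀ ξ η : 𝔞, (ξ : V →L[ℝ] V) * η = (η : V →L[ℝ] V) * ξ)
    (N : Set V)
    (hN : N = {x : V |
      (0 : V) ∈ closure {y : V | ∃ ξ : 𝔞, y = NormedSpace.exp (ξ : V →L[ℝ] V) x}}) :
    (∃ (k : ℕ) (W : Fin k → Submodule ℝ V), N = ⋃ i, (W i : Set V)) ∧ IsClosed N := by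
  classical
  set T : 𝔞 → Module.End ℝ V := fun ξ => ((ξ : V →L[ℝ] V) : V →ₗ[ℝ] V) with hT_def
  have hTsym : ∀ ξ, (T ξ).IsSymmetric := fun ξ v w => hsym ξ v w
  have hTcomm : Pairwise (Function.onFun Commute T) := by
    intro ξ η _
    show T ξ * T η = T η * T ξ
    have := habelian ξ η
    ext v
    simpa [hT_def] using congrArg (fun f => f v) this
  set E : (𝔞 → ℝ) → Submodule ℝ V := fun χ => ⨅ ξ, Module.End.eigenspace (T ξ) (χ ξ) with hE_def
  have hEmem : ∀ χ x, x ∈ E χ ↔ ∀ ξ : 𝔞, (ξ : V →L[ℝ] V) x = χ ξ • x := by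
    intro χ x
    simp only [hE_def, Submodule.mem_iInf, Module.End.mem_eigenspace_iff]
    exact Iff.rfl
  have htop : ⨆ χ : 𝔞 → ℝ, E χ = ⊤ :=
    LinearMap.IsSymmetric.iSup_iInf_eq_top_of_commute hTsym hTcomm
  have horth : ∀ {χ χ' : 𝔞 → ℝ}, χ ≠ χ' → ∀ x ∈ E χ, ∀ y ∈ E χ', ⟪x, y⟫ = 0 := by
    intro χ χ' hne x hx y hy
    have := LinearMap.IsSymmetric.orthogonalFamily_iInf_eigenspaces hTsym hne
      (⟨x, hx⟩ : E χ) (⟨y, hy⟩ : E χ')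
    simpa using this
  have hindep : iSupIndep E :=
    (LinearMap.IsSymmetric.orthogonalFamily_iInf_eigenspaces hTsym).independent
  have hfin : {χ : 𝔞 → ℝ | E χ ≠ ⊥}.Finite := WellFoundedGT.finite_ne_bot_of_iSupIndep hindep
  set Φ : Finset (𝔞 → ℝ) := hfin.toFinset with hΦ_def
  -- exp expansion on sums of joint eigenvectors
  have hexp : ∀ (ξ : 𝔞) (r : ℝ) (t : Finset (𝔞 → ℝ)) (g : (𝔞 → ℝ) → V),
      (∀ i ∈ t, g i ∈ E i) →
      NormedSpace.exp (((r • ξ : 𝔞) : V →L[ℝ] V)) (∑ i ∈ t, g i)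
        = ∑ i ∈ t, Real.exp (r * i ξ) • g i := by
    intro ξ r t g hg
    rw [map_sum]
    refine Finset.sum_congr rfl fun i hi => ?_
    refine exp_apply_eigenvec _ _ _ ?_
    have h1 : (ξ : V →L[ℝ] V) (g i) = i ξ • g i := (hEmem _ _).mp (hg i hi) ξ
    have h2 : ((r • ξ : 𝔞) : V →L[ℝ] V) = r • (ξ : V →L[ℝ] V) := rfl
    rw [h2, ContinuousLinearMap.smul_apply, h1, smul_smul]
  -- the family of subspaces
  set P : Finset (𝔞 → ℝ) → Prop := fun S => ∃ ξ : 𝔞, ∀ χ ∈ S, χ ξ < 0 with hP_def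
  set 𝒮 : Finset (Finset (𝔞 → ℝ)) := Φ.powerset.filter P with h𝒮_def
  set W : Finset (𝔞 → ℝ) → Submodule ℝ V := fun S => ⨆ χ ∈ S, E χ with hW_def
  have main : N = ⋃ S ∈ 𝒮, (W S : Set V) := by
    rw [hN]
    ext x
    simp only [Set.mem_setOf_eq, Set.mem_iUnion, SetLike.mem_coe, exists_prop]
    constructor
    · -- x in null cone → in some W S
      intro hx
      obtain ⟨f, hf, hfsum⟩ := (Submodule.mem_iSup_iff_exists_finsupp E x).mp
        (htop ▸ Submodule.mem_top)
      set S : Finset (𝔞 → ℝ) := f.support with hS_def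
      have hxW : x ∈ W S := by
        rw [← hfsum]
        exact Submodule.sum_mem _ fun χ hχ =>
          Submodule.mem_iSup_of_mem χ (Submodule.mem_iSup_of_mem hχ (hf χ))
      have hSΦ : S ⊆ Φ := by
        intro χ hχ
        rw [hΦ_def, Set.Finite.mem_toFinset]
        intro hbot
        exact Finsupp.mem_support_iff.mp hχ (by simpa [hbot] using hf χ)
      refine ⟨S, ?_, hxW⟩
      rw [h𝒮_def, Finset.mem_filter, Finset.mem_powerset]
      refine ⟨hSΦ, ?_⟩
      rcases S.eq_empty_or_nonempty with hSe | hSne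
      · exact ⟨0, by simp [hSe]⟩
      -- x ≠ 0 case: use closure to find good ξ
      set ε : ℝ := S.inf' hSne (fun χ => ‖f χ‖) with hε_def
      have hεpos : 0 < ε := by
        rw [hε_def, Finset.lt_inf'_iff]
        intro χ hχ
        simpa using Finsupp.mem_support_iff.mp hχ
      obtain ⟨y, ⟨ξ, rfl⟩, hdist⟩ := Metric.mem_closure_iff.mp hx ε hεpos
      refine ⟨ξ, fun χ₀ hχ₀ => ?_⟩
      have hnorm : ‖NormedSpace.exp ((ξ : V →L[ℝ] V)) x‖ < ε := by
        simpa [dist_eq_norm] using hdist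
      have hxsum : x = ∑ χ ∈ S, f χ := by rw [← hfsum]; rfl
      have hyval : NormedSpace.exp ((ξ : V →L[ℝ] V)) x
          = ∑ χ ∈ S, Real.exp (χ ξ) • f χ := by
        have h9 := hexp ξ 1 S (fun χ => f χ) (fun χ _ => hf χ)
        rw [hxsum]
        simpa using h9
      have hinner : ⟪NormedSpace.exp ((ξ : V →L[ℝ] V)) x, f χ₀⟫
          = Real.exp (χ₀ ξ) * (‖f χ₀‖ ^ 2) := by
        rw [hyval, sum_inner]
        rw [Finset.sum_eq_single χ₀]
        · rw [real_inner_smul_left, real_inner_self_eq_norm_sq]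
        · intro χ hχ hne
          rw [real_inner_smul_left, horth hne _ (hf χ) _ (hf χ₀), mul_zero]
        · intro h; exact absurd hχ₀ h
      have hfχ₀pos : (0:ℝ) < ‖f χ₀‖ := by
        simpa using Finsupp.mem_support_iff.mp hχ₀
      have hεle : ε ≤ ‖f χ₀‖ := Finset.inf'_le _ hχ₀
      have hCS : Real.exp (χ₀ ξ) * (‖f χ₀‖ ^ 2) < ‖f χ₀‖ ^ 2 := by
        calc Real.exp (χ₀ ξ) * (‖f χ₀‖ ^ 2)
            = ⟪NormedSpace.exp ((ξ : V →L[ℝ] V)) x, f χ₀⟫ := hinner.symm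
          _ ≤ ‖NormedSpace.exp ((ξ : V →L[ℝ] V)) x‖ * ‖f χ₀‖ := real_inner_le_norm _ _
          _ < ε * ‖f χ₀‖ := by exact mul_lt_mul_of_pos_right hnorm hfχ₀pos
          _ ≤ ‖f χ₀‖ * ‖f χ₀‖ := mul_le_mul_of_nonneg_right hεle (le_of_lt hfχ₀pos)
          _ = ‖f χ₀‖ ^ 2 := (sq ‖f χ₀‖).symm
      have : Real.exp (χ₀ ξ) < 1 := by
        have h2 : (0:ℝ) < ‖f χ₀‖ ^ 2 := by positivity
        nlinarith
      exact Real.exp_lt_one_iff.mp this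
    · -- x ∈ W S for S ∈ 𝒮 → x in null cone
      rintro ⟨S, hS, hxW⟩
      rw [h𝒮_def, Finset.mem_filter] at hS
      obtain ⟨ξ₀, hξ₀⟩ := hS.2
      rw [hW_def] at hxW
      simp only at hxW
      rw [iSup_subtype'] at hxW
      obtain ⟨f, hf, hfsum⟩ := (Submodule.mem_iSup_iff_exists_finsupp _ x).mp hxW
      set g : (𝔞 → ℝ) → V := fun χ => if h : χ ∈ S then f ⟨χ, h⟩ else 0 with hg_def
      have hgE : ∀ χ ∈ S, g χ ∈ E χ := by
        intro χ hχ
        rw [hg_def]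
        simp only [dif_pos hχ]
        simpa using hf ⟨χ, hχ⟩
      have hxsum : x = ∑ χ ∈ S, g χ := by
        rw [← hfsum]
        have h1 : ∑ χ ∈ S, g χ = ∑ σ ∈ S.attach, f σ := by
          rw [← Finset.sum_attach S g]
          refine Finset.sum_congr rfl fun σ _ => ?_
          rw [hg_def]
          simp
        rw [h1]
        rw [Finsupp.sum]
        exact Finset.sum_subset (fun σ _ => Finset.mem_attach _ σ)
          (fun σ _ hσ => Finsupp.notMem_support_iff.mp hσ)
      have hyval : ∀ n : ℕ, NormedSpace.exp ((((n:ℝ) • ξ₀ : 𝔞)) : V →L[ℝ] V) x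
          = ∑ χ ∈ S, Real.exp ((n:ℝ) * χ ξ₀) • g χ := by
        intro n
        rw [hxsum]
        exact hexp ξ₀ (n:ℝ) S g hgE
      have htend : Filter.Tendsto
          (fun n : ℕ => NormedSpace.exp ((((n:ℝ) • ξ₀ : 𝔞)) : V →L[ℝ] V) x)
          Filter.atTop (nhds 0) := by
        simp_rw [hyval]
        rw [show (0:V) = ∑ χ ∈ S, (0:V) by simp]
        refine tendsto_finset_sum _ fun χ hχ => ?_
        have hc : χ ξ₀ < 0 := hξ₀ χ hχ
        have h1 : Filter.Tendsto (fun n : ℕ => (n:ℝ) * χ ξ₀)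
            Filter.atTop Filter.atBot :=
          Filter.Tendsto.atTop_mul_const_of_neg hc tendsto_natCast_atTop_atTop
        have h2 := (Real.tendsto_exp_atBot.comp h1).smul_const (g χ)
        simpa using h2
      refine mem_closure_of_tendsto htend ?_
      exact Filter.Eventually.of_forall fun n => ⟨((n:ℝ) • ξ₀ : 𝔞), rfl⟩
  -- package as Fin-indexed union and closedness
  set l : List (Finset (𝔞 → ℝ)) := 𝒮.toList with hl_def
  have hunion : N = ⋃ i : Fin l.length, ((W (l.get i)) : Set V) := by
    rw [main]
    ext x
    simp only [Set.mem_iUnion, SetLike.mem_coe, exists_prop]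
    constructor
    · rintro ⟨S, hS, hx⟩
      obtain ⟨i, hi⟩ := List.mem_iff_get.mp ((Finset.mem_toList).mpr hS)
      exact ⟨i, by rw [hi]; exact hx⟩
    · rintro ⟨i, hx⟩
      exact ⟨l.get i, Finset.mem_toList.mp (l.get_mem i), hx⟩
  constructor
  · exact ⟨l.length, fun i => W (l.get i), hunion⟩
  · rw [hunion]
    exact isClosed_iUnion_of_finite fun i => (W (l.get i)).closed_of_finiteDimensional
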